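/- Let n ≥ 3, let g : Fin n → Fin n → ℝ be a symmetric positive definite bilinear form and Ric : Fin n → Fin n → ℝ a symmetric bilinear form. Suppose the tensor R defined by R i j k l = (1/(n-1)) * (g i k * Ric j l - g i l * Ric j k) satisfies the pair symmetry R i j k l = R k l i j for all indices. Then there exists κ : ℝ such that Ric i j = (n-1) * κ * g i j for all i, j. -/

import Mathlib

theorem stmt_3 (n : ℕ) (hn : 3 ≤ n) (g Ric : Fin n → Fin n → ℝ)
    (hg_symm : ∀ i j, g i j = g j i)
    (hg_pos : ∀ v : Fin n → ℝ, v ≠ 0 → 0 < ∑ i, ∑ j, g i j * v i * v j)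
    (hRic_symm : ∀ i j, Ric i j = Ric j i)
    (hpair : ∀ i j k l : Fin n,
      (1 / ((n : ℝ) - 1)) * (g i k * Ric j l - g i l * Ric j k)
        = (1 / ((n : ℝ) - 1)) * (g k i * Ric l j - g k j * Ric l i)) :
    ∃ κ : ℝ, ∀ i j, Ric i j = ((n : ℝ) - 1) * κ * g i j := by
  have hnpos : 0 < n := by omega
  have hn3 : (3 : ℝ) ≤ (n : ℝ) := by exact_mod_cast hn
  have hn1 : ((n : ℝ) - 1) ≠ 0 := by linarith
  have key : ∀ i j k l : Fin n, g i l * Ric j k = g j k * Ric i l := by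
    intro i j k l
    have h := hpair i j k l
    have h' := mul_left_cancel₀ (one_div_ne_zero hn1) h
    rw [hg_symm k i, hRic_symm l j, hg_symm k j, hRic_symm l i] at h'
    linarith
  have i0 : Fin n := ⟨0, hnpos⟩
  set v : Fin n → ℝ := fun t => if t = i0 then 1 else 0 with hv
  have hvne : v ≠ 0 := by
    intro h
    have : v i0 = 0 := by rw [h]; rfl
    simp [hv] at this
  have hsum : ∑ i, ∑ j, g i j * v i * v j = g i0 i0 := by
    simp [hv, mul_ite, ite_mul, Finset.sum_ite_eq']
  have hg0 : 0 < g i0 i0 := by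
    have := hg_pos v hvne
    rwa [hsum] at this
  refine ⟨Ric i0 i0 / (((n : ℝ) - 1) * g i0 i0), ?_⟩
  intro i j
  have h := key i0 i j i0
  -- h : g i0 i0 * Ric i j = g i j * Ric i0 i0
  field_simp
  linear_combination h
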